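/- The vector fields χ1 = cos v cos y ∂x + cos v tan x sin y ∂y + sin v tan x sec y ∂v and χ2 = sin v cos y ∂x + sin v tan x sin y ∂y − cos v tan x sec y ∂v satisfy the Lie bracket relation [χ1, χ2] = −χ6, where χ6 = ∂v. -/

import Mathlib

noncomputable section
open Real
lemma L1 (x a b : ℝ) (hx : cos x ≠ 0) :
    deriv (fun t : ℝ => a * tan t * b) x = a * (1 / cos x ^ 2) * b :=
  ((Real.hasDerivAt_tan hx).const_mul a |>.mul_const b).deriv.trans (by ring)
lemma L2 (y a : ℝ) : deriv (fun t : ℝ => a * cos t) y = -(a * sin y) := by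
  simp [mul_comm]
lemma L3 (y a b : ℝ) : deriv (fun t : ℝ => a * b * sin t) y = a * b * cos y := by
  simp [mul_comm]
lemma L4 (y a b : ℝ) (hy : cos y ≠ 0) :
    deriv (fun t : ℝ => a * b * (cos t)⁻¹) y = a * b * (sin y / cos y ^ 2) := by
  have h : HasDerivAt (fun t : ℝ => (cos t)⁻¹) (-(-sin y) / cos y ^ 2) y :=
    (Real.hasDerivAt_cos y).inv hy
  rw [(h.const_mul (a * b)).deriv]; ring
lemma L5 (v b : ℝ) : deriv (fun t : ℝ => cos t * b) v = -(sin v * b) := by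
  simp
lemma L6 (v a b : ℝ) : deriv (fun t : ℝ => cos t * a * b) v = -(sin v * a * b) := by
  have := ((Real.hasDerivAt_cos v).mul_const a).mul_const b
  simpa using this.deriv.trans (by ring)
lemma L7 (v b : ℝ) : deriv (fun t : ℝ => sin t * b) v = cos v * b := by
  simp
lemma L8 (v a b : ℝ) : deriv (fun t : ℝ => sin t * a * b) v = cos v * a * b := by
  have := ((Real.hasDerivAt_sin v).mul_const a).mul_const b
  simpa using this.deriv.trans (by ring)
/-- Partial derivative in the first coordinate x. -/
def Dx (g : ℝ → ℝ → ℝ → ℝ) (x y v : ℝ) : ℝ := deriv (fun t => g t y v) x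
/-- Partial derivative in the second coordinate y. -/
def Dy (g : ℝ → ℝ → ℝ → ℝ) (x y v : ℝ) : ℝ := deriv (fun t => g x t v) y
/-- Partial derivative in the third coordinate v. -/
def Dv (g : ℝ → ℝ → ℝ → ℝ) (x y v : ℝ) : ℝ := deriv (fun t => g x y t) v

/-- Directional derivative of g along the vector field (X1, X2, X3). -/
def dirD (X1 X2 X3 g : ℝ → ℝ → ℝ → ℝ) (x y v : ℝ) : ℝ :=
  X1 x y v * Dx g x y v + X2 x y v * Dy g x y v + X3 x y v * Dv g x y v

/-- Componentwise Lie bracket [A, B]ⁱ = Σⱼ (Aʲ ∂ⱼBⁱ − Bʲ ∂ⱼAⁱ). -/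
def lieB (A1 A2 A3 B1 B2 B3 : ℝ → ℝ → ℝ → ℝ) (x y v : ℝ) : ℝ × ℝ × ℝ :=
  (dirD A1 A2 A3 B1 x y v - dirD B1 B2 B3 A1 x y v,
   dirD A1 A2 A3 B2 x y v - dirD B1 B2 B3 A2 x y v,
   dirD A1 A2 A3 B3 x y v - dirD B1 B2 B3 A3 x y v)

def chi1₁ : ℝ → ℝ → ℝ → ℝ := fun _ y v => cos v * cos y
def chi1₂ : ℝ → ℝ → ℝ → ℝ := fun x y v => cos v * tan x * sin y
def chi1₃ : ℝ → ℝ → ℝ → ℝ := fun x y v => sin v * tan x * (cos y)⁻¹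

def chi2₁ : ℝ → ℝ → ℝ → ℝ := fun _ y v => sin v * cos y
def chi2₂ : ℝ → ℝ → ℝ → ℝ := fun x y v => sin v * tan x * sin y
def chi2₃ : ℝ → ℝ → ℝ → ℝ := fun x y v => -(cos v * tan x * (cos y)⁻¹)

def chi3₁ : ℝ → ℝ → ℝ → ℝ := fun _ y _ => sin y
def chi3₂ : ℝ → ℝ → ℝ → ℝ := fun x y _ => -(tan x * cos y)
def chi3₃ : ℝ → ℝ → ℝ → ℝ := fun _ _ _ => 0

def chi4₁ : ℝ → ℝ → ℝ → ℝ := fun _ _ _ => 0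
def chi4₂ : ℝ → ℝ → ℝ → ℝ := fun _ _ v => cos v
def chi4₃ : ℝ → ℝ → ℝ → ℝ := fun _ y v => sin v * tan y

def chi5₁ : ℝ → ℝ → ℝ → ℝ := fun _ _ _ => 0
def chi5₂ : ℝ → ℝ → ℝ → ℝ := fun _ _ v => sin v
def chi5₃ : ℝ → ℝ → ℝ → ℝ := fun _ y v => -(cos v * tan y)

def chi6₁ : ℝ → ℝ → ℝ → ℝ := fun _ _ _ => 0
def chi6₂ : ℝ → ℝ → ℝ → ℝ := fun _ _ _ => 0
def chi6₃ : ℝ → ℝ → ℝ → ℝ := fun _ _ _ => 1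

theorem chi1_chi2_bracket (x y v : ℝ) (hx : cos x ≠ 0) (hy : cos y ≠ 0) :
    lieB chi1₁ chi1₂ chi1₃ chi2₁ chi2₂ chi2₃ x y v =
      (-(chi6₁ x y v), -(chi6₂ x y v), -(chi6₃ x y v)) := by
  have hs : sin x ^ 2 + cos x ^ 2 = 1 := sin_sq_add_cos_sq x
  have hsy : sin y ^ 2 + cos y ^ 2 = 1 := sin_sq_add_cos_sq y
  have hsv : sin v ^ 2 + cos v ^ 2 = 1 := sin_sq_add_cos_sq v
  simp only [lieB, dirD, Dx, Dy, Dv, chi1₁, chi1₂, chi1₃, chi2₁, chi2₂, chi2₃,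
    chi6₁, chi6₂, chi6₃, deriv.neg, deriv.fun_neg, deriv_const, Prod.mk.injEq,
    L1 _ _ _ hx, L2, L3, L4 _ _ _ hy, L5, L6, L7, L8]
  refine ⟨?_, ?_, ?_⟩ <;> rw [Real.tan_eq_sin_div_cos] <;> field_simp <;> ring_nf <;> simp only [Real.sin_sq] <;> ring_nf

end
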